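/- For every c ∈ [−1,1], the real symmetric 4×4 matrix Mb(c) is negative semidefinite (equivalently, all its eigenvalues are non-positive): xᵀ Mb(c) x ≤ 0 for all x ∈ ℝ⁴. -/

import Mathlib

open Matrix

/-- The matrix `Mb(c)`: 36h times the matrix of the interface quadratic form
`Θ_{3/2}` at the first interior interface of the two-point-block BFD scheme
for the heat equation with Dirichlet boundary conditions. -/
noncomputable def Mbmat (c : ℝ) : Matrix (Fin 4) (Fin 4) ℝ :=
  !![3*(8*c-19),   71-40*c,        (8*c-7)/2,    (1-8*c)/2;
     71-40*c,      56*c-169,       (113-40*c)/2, (40*c-23)/2;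
     (8*c-7)/2,    (113-40*c)/2,   56*c-169,     71-40*c;
     (1-8*c)/2,    (40*c-23)/2,    71-40*c,      3*(8*c-19)]

/-- For every `c ∈ [-1,1]`, `Mb(c)` is negative semidefinite:
`xᵀ Mb(c) x ≤ 0` for all `x ∈ ℝ⁴`. -/
theorem Mbmat_negSemidef (c : ℝ) (hc : c ∈ Set.Icc (-1 : ℝ) 1) (x : Fin 4 → ℝ) :
    x ⬝ᵥ (Mbmat c *ᵥ x) ≤ 0 := by
  obtain ⟨h1, h2⟩ := hc
  have hp : (0:ℝ) ≤ 1 + c := by linarith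
  have hm : (0:ℝ) ≤ 1 - c := by linarith
  set a := x 0
  set b := x 1
  set d := x 2
  set e := x 3
  have hexp : x ⬝ᵥ (Mbmat c *ᵥ x) =
      a*(3*(8*c-19)*a + (71-40*c)*b + (8*c-7)/2*d + (1-8*c)/2*e)
    + b*((71-40*c)*a + (56*c-169)*b + (113-40*c)/2*d + (40*c-23)/2*e)
    + d*((8*c-7)/2*a + (113-40*c)/2*b + (56*c-169)*d + (71-40*c)*e)
    + e*((1-8*c)/2*a + (40*c-23)/2*b + (71-40*c)*d + 3*(8*c-19)*e) := by
    simp [Mbmat, dotProduct, mulVec, Fin.sum_univ_four]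
    rfl
  rw [hexp]
  nlinarith [mul_nonneg hp (sq_nonneg (66*a - 62*b - d + 7*e)),
             mul_nonneg hp (sq_nonneg (692*b - 305*d - 43*e)),
             mul_nonneg hp (sq_nonneg (13383*d - 4601*e)),
             mul_nonneg hp (sq_nonneg e),
             mul_nonneg hm (sq_nonneg (54*a - 74*b + 5*d - 3*e)),
             mul_nonneg hm (sq_nonneg (164*b - 149*d + 57*e)),
             mul_nonneg hm (sq_nonneg (8973*d - 4787*e)),
             mul_nonneg hm (sq_nonneg e)]
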